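/- Let {P_n}_{n≥0} be a monic OPS with respect to a linear functional u_0 on ℂ[x], and set Q_n := (n+1)^{-1} D_ω P_{n+1}. Then {Q_n}_{n≥0} is an OPS (with respect to some linear functional) if and only if there exist sequences of complex numbers (a_n)_{n≥0} and (b_n)_{n≥0} such that P_{n+2} = Q_{n+2} + a_{n+1} Q_{n+1} + b_n Q_n for all n ≥ 0 and P_1 = Q_1 + a_0. -/

import Mathlib

open Polynomial

/-- The Hahn difference operator `D_ω` acting on polynomials:
`(D_ω f)(x) = (f(x+ω) − f(x))/ω`. -/
noncomputable def Dw (ω : ℂ) (f : Polynomial ℂ) : Polynomial ℂ :=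
  C ω⁻¹ * (f.comp (X + C ω) - f)

/-- A monic polynomial sequence: each `P n` is monic of degree `n`. -/
def MonicPS (P : ℕ → Polynomial ℂ) : Prop :=
  ∀ n, (P n).Monic ∧ (P n).natDegree = n

/-- Three-term recurrence with coefficients `β`, `γ` (where `γ (n+1)` is used). -/
def TTR (P : ℕ → Polynomial ℂ) (β γ : ℕ → ℂ) : Prop :=
  P 0 = 1 ∧ P 1 = X - C (β 0) ∧
    ∀ n : ℕ, P (n + 2) = (X - C (β (n + 1))) * P (n + 1) - C (γ (n + 1)) * P n

/-- Orthogonality of a polynomial sequence with respect to a linear functional. -/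
def IsOPSwrt (P : ℕ → Polynomial ℂ) (u : Polynomial ℂ →ₗ[ℂ] ℂ) : Prop :=
  (∀ n m, n ≠ m → u (P n * P m) = 0) ∧ ∀ n, u (P n * P n) ≠ 0

namespace SSR

/-- coefficient of `taylor` at an index at least the degree is unchanged -/
lemma taylor_coeff_high {f : Polynomial ℂ} {k : ℕ} (h : f.natDegree ≤ k) (r : ℂ) :
    (Polynomial.taylor r f).coeff k = f.coeff k := by
  rw [taylor_coeff]
  have hh : hasseDeriv k f = C (f.coeff k) := by
    ext n
    rw [hasseDeriv_coeff, coeff_C]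
    cases n with
    | zero => simp
    | succ n =>
      have : f.coeff (n + 1 + k) = 0 :=
        coeff_eq_zero_of_natDegree_lt (by omega)
      simp [this]
  rw [hh, eval_C]

lemma taylor_coeff_subtop {f : Polynomial ℂ} {m : ℕ} (h : f.natDegree ≤ m + 1) (r : ℂ) :
    (Polynomial.taylor r f).coeff m = f.coeff m + ((m : ℂ) + 1) * r * f.coeff (m + 1) := by
  rw [taylor_coeff]
  have hh : hasseDeriv m f = C (f.coeff m) + C (((m : ℂ) + 1) * f.coeff (m + 1)) * X := by
    ext n
    rw [hasseDeriv_coeff]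
    match n with
    | 0 => simp
    | 1 =>
      have hc : (1 + m).choose m = m + 1 := by
        rw [Nat.add_comm]; exact Nat.choose_succ_self_right m
      simp [hc, coeff_C]
      left; rw [Nat.add_comm]
    | (n+2) =>
      have : f.coeff (n + 2 + m) = 0 := coeff_eq_zero_of_natDegree_lt (by omega)
      simp [this, coeff_C, coeff_one]
  rw [hh]
  simp
  ring

lemma Dw_coeff {ω : ℂ} (hω : ω ≠ 0) {f : Polynomial ℂ} {m : ℕ} (h : f.natDegree ≤ m + 1) :
    (Dw ω f).coeff m = ((m : ℂ) + 1) * f.coeff (m + 1) := by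
  rw [Dw, coeff_C_mul, coeff_sub, ← taylor_apply, taylor_coeff_subtop h]
  field_simp
  ring

lemma Dw_natDegree_le {ω : ℂ} {f : Polynomial ℂ} {m : ℕ} (h : f.natDegree ≤ m + 1) :
    (Dw ω f).natDegree ≤ m := by
  rw [natDegree_le_iff_coeff_eq_zero]
  intro N hN
  rw [Dw, coeff_C_mul, coeff_sub, ← taylor_apply, taylor_coeff_high (le_trans h hN)]
  simp

lemma Dw_C {ω : ℂ} (c : ℂ) : Dw ω (C c) = 0 := by simp [Dw]

lemma Dw_one {ω : ℂ} : Dw ω (1 : Polynomial ℂ) = 0 := by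
  simpa using Dw_C (ω := ω) 1

lemma Dw_mul {ω : ℂ} (f g : Polynomial ℂ) :
    Dw ω (f * g) = f * Dw ω g + g.comp (X + C ω) * Dw ω f := by
  simp only [Dw, mul_comp]
  ring

lemma Dw_C_mul {ω : ℂ} (c : ℂ) (f : Polynomial ℂ) :
    Dw ω (C c * f) = C c * Dw ω f := by
  simp only [Dw, mul_comp, C_comp]
  ring

lemma comp_collapse {ω : ℂ} (f : Polynomial ℂ) :
    (f.comp (X + C (-ω))).comp (X + C ω) = f := by
  rw [comp_assoc]
  simp

lemma comp_shift_eq {ω : ℂ} (hω : ω ≠ 0) (f : Polynomial ℂ) :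
    f.comp (X + C ω) = f + C ω * Dw ω f := by
  rw [Dw, ← mul_assoc, ← C_mul, mul_inv_cancel₀ hω, C_1, one_mul]
  ring


lemma monicPS_zero_eq_one {P : ℕ → Polynomial ℂ} (hP : MonicPS P) : P 0 = 1 :=
  ((hP 0).1.natDegree_eq_zero).mp (hP 0).2

lemma mem_span_monicPS {P : ℕ → Polynomial ℂ} (hP : MonicPS P) :
    ∀ N (g : Polynomial ℂ), g.natDegree ≤ N →
      g ∈ Submodule.span ℂ (P '' Set.Iic N) := by
  intro N
  induction N with
  | zero =>
    intro g hg
    rw [eq_C_of_natDegree_le_zero hg]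
    have h0 : P 0 = 1 := monicPS_zero_eq_one hP
    have : C (g.coeff 0) = g.coeff 0 • P 0 := by
      rw [h0, smul_eq_C_mul, mul_one]
    rw [this]
    exact Submodule.smul_mem _ _ (Submodule.subset_span ⟨0, Set.mem_Iic.mpr le_rfl, rfl⟩)
  | succ N ih =>
    intro g hg
    by_cases hle : g.natDegree ≤ N
    · exact Submodule.span_mono
        (Set.image_mono (Set.Iic_subset_Iic.mpr (Nat.le_succ N))) (ih g hle)
    · set r := g - C (g.coeff (N + 1)) * P (N + 1) with hr
      have hrd : r.natDegree ≤ N := by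
        rw [natDegree_le_iff_coeff_eq_zero]
        intro M hM
        rw [hr, coeff_sub, coeff_C_mul]
        rcases Nat.lt_or_ge (N + 1) M with h' | h'
        · have e1 : g.coeff M = 0 := coeff_eq_zero_of_natDegree_lt (lt_of_le_of_lt hg h')
          have e2 : (P (N + 1)).coeff M = 0 :=
            coeff_eq_zero_of_natDegree_lt (by rw [(hP (N + 1)).2]; exact h')
          rw [e1, e2, mul_zero, sub_zero]
        · have hM1 : M = N + 1 := le_antisymm (by omega) hM
          subst hM1
          have : (P (N + 1)).coeff (N + 1) = 1 := by
            have := (hP (N + 1)).1.coeff_natDegree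
            rwa [(hP (N + 1)).2] at this
          rw [this, mul_one, sub_self]
      have hmem : C (g.coeff (N + 1)) * P (N + 1) ∈ Submodule.span ℂ (P '' Set.Iic (N + 1)) := by
        rw [← smul_eq_C_mul]
        exact Submodule.smul_mem _ _ (Submodule.subset_span ⟨N + 1, Set.mem_Iic.mpr le_rfl, rfl⟩)
      have : g = r + C (g.coeff (N + 1)) * P (N + 1) := by rw [hr]; ring
      rw [this]
      exact Submodule.add_mem _
        (Submodule.span_mono (Set.image_mono (Set.Iic_subset_Iic.mpr (Nat.le_succ N)))
          (ih r hrd)) hmem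

lemma span_top_monicPS {P : ℕ → Polynomial ℂ} (hP : MonicPS P) :
    Submodule.span ℂ (Set.range P) = ⊤ := by
  rw [eq_top_iff]
  intro g _
  exact Submodule.span_mono (Set.image_subset_range _ _)
    (mem_span_monicPS hP g.natDegree g le_rfl)

/-- two linear functionals agreeing on a monic PS agree everywhere -/
lemma ext_monicPS {P : ℕ → Polynomial ℂ} (hP : MonicPS P)
    {L1 L2 : Polynomial ℂ →ₗ[ℂ] ℂ} (h : ∀ n, L1 (P n) = L2 (P n)) : L1 = L2 :=
  LinearMap.ext_on (span_top_monicPS hP) (by rintro _ ⟨n, rfl⟩; exact h n)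

/-- orthogonality kills pairings with lower-degree polynomials -/
lemma pair_zero {P : ℕ → Polynomial ℂ} (hP : MonicPS P) {u : Polynomial ℂ →ₗ[ℂ] ℂ}
    (horth : ∀ n m, n ≠ m → u (P n * P m) = 0) {g : Polynomial ℂ} {n : ℕ}
    (h : g.natDegree < n) : u (g * P n) = 0 := by
  obtain ⟨d, rfl⟩ : ∃ d, n = d + 1 := ⟨n - 1, by omega⟩
  have key : ∀ x ∈ Submodule.span ℂ (P '' Set.Iic d), u (x * P (d + 1)) = 0 := by
    intro x hx
    induction hx using Submodule.span_induction with
    | mem x hx =>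
      obtain ⟨k, hk, rfl⟩ := hx
      have hk' : k ≤ d := hk
      exact horth k (d + 1) (by omega)
    | zero => simp
    | add x y _ _ hx hy => rw [add_mul, map_add, hx, hy, add_zero]
    | smul c x _ hx => rw [smul_mul_assoc, map_smul, hx, smul_zero]
  exact key g (mem_span_monicPS hP d g (by omega))

/-- pairing with `P n` picks out the `n`-th coefficient (given the vanishing property) -/
lemma pair_coeff {P : ℕ → Polynomial ℂ} (hP : MonicPS P) {u : Polynomial ℂ →ₗ[ℂ] ℂ}
    (hvan : ∀ (g : Polynomial ℂ) (k : ℕ), g.natDegree < k → u (g * P k) = 0)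
    {g : Polynomial ℂ} {n : ℕ} (h : g.natDegree ≤ n) :
    u (g * P n) = g.coeff n * u (P n * P n) := by
  set r := g - C (g.coeff n) * P n with hr
  have hPc : (P n).coeff n = 1 := by
    have := (hP n).1.coeff_natDegree
    rwa [(hP n).2] at this
  have hrd : r.natDegree ≤ n := by
    apply le_trans (natDegree_sub_le _ _)
    simp only [max_le_iff]
    exact ⟨h, le_trans (natDegree_C_mul_le _ _) (le_of_eq (hP n).2)⟩
  have hrc : r.coeff n = 0 := by
    rw [hr, coeff_sub, coeff_C_mul, hPc, mul_one, sub_self]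
  have hru : u (r * P n) = 0 := by
    rcases eq_or_ne r 0 with h0 | h0
    · rw [h0, zero_mul, map_zero]
    · apply hvan
      rcases lt_or_eq_of_le hrd with h' | h'
      · exact h'
      · exfalso
        apply leadingCoeff_ne_zero.mpr h0
        rw [leadingCoeff, h']
        exact hrc
  have : g = r + C (g.coeff n) * P n := by rw [hr]; ring
  calc u (g * P n) = u (r * P n) + u (C (g.coeff n) * (P n * P n)) := by
        rw [← map_add]; congr 1; nth_rewrite 1 [this]; ring
    _ = g.coeff n * u (P n * P n) := by
        rw [hru, zero_add, ← smul_eq_C_mul, map_smul, smul_eq_mul]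

lemma eq_zero_of_pair {P : ℕ → Polynomial ℂ} (hP : MonicPS P) {u : Polynomial ℂ →ₗ[ℂ] ℂ}
    (hvan : ∀ (g : Polynomial ℂ) (k : ℕ), g.natDegree < k → u (g * P k) = 0)
    (hne : ∀ k, u (P k * P k) ≠ 0) {g : Polynomial ℂ}
    (h : ∀ k, u (g * P k) = 0) : g = 0 := by
  by_contra h0
  have := pair_coeff hP hvan (le_refl g.natDegree)
  rw [h g.natDegree, coeff_natDegree] at this
  exact hne g.natDegree (by
    rcases mul_eq_zero.mp this.symm with h' | h'
    · exact absurd h' (leadingCoeff_ne_zero.mpr h0)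
    · exact h')


lemma ncast_ne (n : ℕ) : ((n : ℂ) + 1) ≠ 0 := by
  have : (((n + 1 : ℕ)) : ℂ) ≠ 0 := Nat.cast_ne_zero.mpr (Nat.succ_ne_zero n)
  push_cast at this
  exact this

lemma DwP_eq {ω : ℂ} {P Q : ℕ → Polynomial ℂ}
    (hQ : ∀ n, Q n = ((n : ℂ) + 1)⁻¹ • Dw ω (P (n + 1))) (n : ℕ) :
    Dw ω (P (n + 1)) = ((n : ℂ) + 1) • Q n := by
  rw [hQ n, smul_smul, mul_inv_cancel₀ (ncast_ne n), one_smul]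

lemma Q_monicPS {ω : ℂ} (hω : ω ≠ 0) {P Q : ℕ → Polynomial ℂ} (hP : MonicPS P)
    (hQ : ∀ n, Q n = ((n : ℂ) + 1)⁻¹ • Dw ω (P (n + 1))) : MonicPS Q := by
  intro n
  have hd : (P (n + 1)).natDegree ≤ n + 1 := le_of_eq (hP (n + 1)).2
  have hPc : (P (n + 1)).coeff (n + 1) = 1 := by
    have := (hP (n + 1)).1.coeff_natDegree
    rwa [(hP (n + 1)).2] at this
  have hcoeff : (Q n).coeff n = 1 := by
    rw [hQ n, coeff_smul, Dw_coeff hω hd, hPc, mul_one, smul_eq_mul,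
      inv_mul_cancel₀ (ncast_ne n)]
  have hle : (Q n).natDegree ≤ n := by
    rw [hQ n]
    exact le_trans (natDegree_smul_le _ _) (Dw_natDegree_le hd)
  have hdeg : (Q n).natDegree = n :=
    le_antisymm hle (le_natDegree_of_ne_zero (by rw [hcoeff]; exact one_ne_zero))
  exact ⟨by rwa [Monic, leadingCoeff, hdeg], hdeg⟩

lemma adjoint {ω : ℂ} (hω : ω ≠ 0) {P Q : ℕ → Polynomial ℂ} (hP : MonicPS P)
    {u0 : Polynomial ℂ →ₗ[ℂ] ℂ} (horthP : ∀ n m, n ≠ m → u0 (P n * P m) = 0)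
    (hQ : ∀ n, Q n = ((n : ℂ) + 1)⁻¹ • Dw ω (P (n + 1)))
    {v : Polynomial ℂ →ₗ[ℂ] ℂ} (hv : ∀ m, 1 ≤ m → v (Q m) = 0)
    (hQ0 : Q 0 = 1) (f : Polynomial ℂ) :
    u0 (P 1 * P 1) * v (Dw ω f) = v 1 * u0 (P 1 * f) := by
  set DwL : Polynomial ℂ →ₗ[ℂ] Polynomial ℂ :=
    ω⁻¹ • ((Polynomial.taylor ω : Polynomial ℂ →ₗ[ℂ] Polynomial ℂ) - LinearMap.id) with hDwL
  have hDwLf : ∀ g : Polynomial ℂ, DwL g = Dw ω g := by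
    intro g
    simp only [hDwL, LinearMap.smul_apply, LinearMap.sub_apply, LinearMap.id_apply,
      taylor_apply, Dw, smul_eq_C_mul]
  set L1 : Polynomial ℂ →ₗ[ℂ] ℂ := u0 (P 1 * P 1) • (v ∘ₗ DwL) with hL1
  set L2 : Polynomial ℂ →ₗ[ℂ] ℂ := v 1 • (u0 ∘ₗ (LinearMap.mulLeft ℂ (P 1))) with hL2
  have hext : L1 = L2 := by
    apply ext_monicPS hP
    intro n
    have hL1n : ∀ g, L1 g = u0 (P 1 * P 1) * v (Dw ω g) := by
      intro g
      simp [hL1, hDwLf]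
    have hL2n : ∀ g, L2 g = v 1 * u0 (P 1 * g) := by
      intro g
      simp [hL2, LinearMap.mulLeft_apply]
    rw [hL1n, hL2n]
    match n with
    | 0 =>
      rw [monicPS_zero_eq_one hP, Dw_one, map_zero, mul_zero, mul_one]
      have := horthP 1 0 one_ne_zero
      rw [monicPS_zero_eq_one hP, mul_one] at this
      rw [this, mul_zero]
    | 1 =>
      rw [DwP_eq hQ 0, hQ0]
      push_cast
      simp only [map_smul, smul_eq_mul]
      ring
    | (m+2) =>
      rw [DwP_eq hQ (m+1), map_smul, smul_eq_mul, hv (m+1) (by omega),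
        horthP 1 (m+2) (by omega)]
      ring
  have := LinearMap.congr_fun hext f
  simpa [hL1, hL2, hDwLf, LinearMap.mulLeft_apply] using this


lemma coeff_top {P : ℕ → Polynomial ℂ} (hP : MonicPS P) (n : ℕ) : (P n).coeff n = 1 := by
  have := (hP n).1.coeff_natDegree
  rwa [(hP n).2] at this

lemma natDegree_comp_shift {ω : ℂ} (f : Polynomial ℂ) :
    (f.comp (X + C ω)).natDegree = f.natDegree := by
  rw [← taylor_apply, natDegree_taylor]

lemma forward_vanish {ω : ℂ} (hω : ω ≠ 0) {P Q : ℕ → Polynomial ℂ} (hP : MonicPS P)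
    {u0 v : Polynomial ℂ →ₗ[ℂ] ℂ}
    (horthP : ∀ n m, n ≠ m → u0 (P n * P m) = 0)
    (hneP : ∀ k, u0 (P k * P k) ≠ 0)
    (hQ : ∀ n, Q n = ((n : ℂ) + 1)⁻¹ • Dw ω (P (n + 1)))
    (horthQ : ∀ n m, n ≠ m → v (Q n * Q m) = 0)
    {j n : ℕ} (h : j < n) : v (P (n + 2) * Q j) = 0 := by
  have hQm := Q_monicPS hω hP hQ
  have hQ0 : Q 0 = 1 := monicPS_zero_eq_one hQm
  have hv : ∀ m, 1 ≤ m → v (Q m) = 0 := by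
    intro m hm
    have := horthQ m 0 (by omega)
    rwa [hQ0, mul_one] at this
  have hPR := Dw_mul (ω := ω) (P (n + 2)) (P (j + 1))
  rw [DwP_eq hQ j, show n + 2 = (n + 1) + 1 from rfl, DwP_eq hQ (n + 1)] at hPR
  have hva := congrArg v hPR
  rw [map_add, mul_smul_comm, mul_smul_comm, map_smul, map_smul] at hva
  have hcomp0 : v ((P (j + 1)).comp (X + C ω) * Q (n + 1)) = 0 := by
    apply pair_zero hQm horthQ
    rw [natDegree_comp_shift, (hP (j + 1)).2]
    omega
  have hadj := adjoint hω hP horthP hQ hv hQ0 (P (n + 2) * P (j + 1))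
  have hu0 : u0 (P 1 * (P (n + 2) * P (j + 1))) = 0 := by
    have : P 1 * (P (n + 2) * P (j + 1)) = (P 1 * P (j + 1)) * P (n + 2) := by ring
    rw [this]
    apply pair_zero hP horthP
    apply lt_of_le_of_lt (natDegree_mul_le)
    rw [(hP 1).2, (hP (j + 1)).2]
    omega
  rw [hu0, mul_zero] at hadj
  rcases mul_eq_zero.mp hadj with h' | h'
  · exact absurd h' (hneP 1)
  · rw [h', hcomp0, smul_zero, add_zero, smul_eq_mul] at hva
    rcases mul_eq_zero.mp hva.symm with h'' | h''
    · exact absurd h'' (ncast_ne j)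
    · exact h''

lemma forward {ω : ℂ} (hω : ω ≠ 0) {P Q : ℕ → Polynomial ℂ} (hP : MonicPS P)
    {u0 : Polynomial ℂ →ₗ[ℂ] ℂ} (hops : (∀ n m, n ≠ m → u0 (P n * P m) = 0) ∧
      ∀ n, u0 (P n * P n) ≠ 0)
    (hQ : ∀ n, Q n = ((n : ℂ) + 1)⁻¹ • Dw ω (P (n + 1)))
    {v : Polynomial ℂ →ₗ[ℂ] ℂ}
    (horthQ : ∀ n m, n ≠ m → v (Q n * Q m) = 0)
    (hneQ : ∀ n, v (Q n * Q n) ≠ 0) :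
    ∃ a b : ℕ → ℂ,
      (∀ n, P (n + 2) = Q (n + 2) + C (a (n + 1)) * Q (n + 1) + C (b n) * Q n) ∧
      P 1 = Q 1 + C (a 0) := by
  obtain ⟨horthP, hneP⟩ := hops
  have hQm := Q_monicPS hω hP hQ
  have hQvan : ∀ (g : Polynomial ℂ) (k : ℕ), g.natDegree < k → v (g * Q k) = 0 :=
    fun g k hk => pair_zero hQm horthQ hk
  set a : ℕ → ℂ := fun k =>
    Nat.casesOn k ((P 1 - Q 1).coeff 0)
      (fun m => v (P (m + 2) * Q (m + 1)) / v (Q (m + 1) * Q (m + 1))) with ha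
  set b : ℕ → ℂ := fun n => v (P (n + 2) * Q n) / v (Q n * Q n) with hb
  refine ⟨a, b, ?_, ?_⟩
  · intro n
    have key : P (n + 2) - Q (n + 2) - C (a (n + 1)) * Q (n + 1) - C (b n) * Q n = 0 := by
      apply eq_zero_of_pair hQm hQvan hneQ
      intro k
      have expand : v ((P (n + 2) - Q (n + 2) - C (a (n + 1)) * Q (n + 1) - C (b n) * Q n) * Q k)
          = v (P (n + 2) * Q k) - v (Q (n + 2) * Q k)
            - a (n + 1) * v (Q (n + 1) * Q k) - b n * v (Q n * Q k) := by
        have : (P (n + 2) - Q (n + 2) - C (a (n + 1)) * Q (n + 1) - C (b n) * Q n) * Q k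
            = P (n + 2) * Q k - Q (n + 2) * Q k - C (a (n + 1)) * (Q (n + 1) * Q k)
              - C (b n) * (Q n * Q k) := by ring
        rw [this, map_sub, map_sub, map_sub, ← smul_eq_C_mul, ← smul_eq_C_mul,
          map_smul, map_smul, smul_eq_mul, smul_eq_mul]
      rw [expand]
      rcases lt_trichotomy k n with hk | hk | hk
      · rw [forward_vanish hω hP horthP hneP hQ horthQ (by omega),
          horthQ (n + 2) k (by omega), horthQ (n + 1) k (by omega), horthQ n k (by omega)]
        ring
      · subst hk
        rw [horthQ (k + 2) k (by omega), horthQ (k + 1) k (by omega)]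
        have hbk : b k = v (P (k + 2) * Q k) / v (Q k * Q k) := rfl
        rw [hbk, div_mul_cancel₀ _ (hneQ k)]
        ring
      · by_cases hk1 : k = n + 1
        · subst hk1
          rw [horthQ (n + 2) (n + 1) (by omega), horthQ n (n + 1) (by omega)]
          have hak : a (n + 1) = v (P (n + 2) * Q (n + 1)) / v (Q (n + 1) * Q (n + 1)) := rfl
          rw [hak, div_mul_cancel₀ _ (hneQ (n + 1))]
          ring
        · by_cases hk2 : k = n + 2
          · subst hk2
            rw [horthQ (n + 1) (n + 2) (by omega), horthQ n (n + 2) (by omega)]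
            have hPQ : v (P (n + 2) * Q (n + 2)) = v (Q (n + 2) * Q (n + 2)) := by
              have := pair_coeff hQm hQvan (g := P (n + 2)) (n := n + 2)
                (le_of_eq (hP (n + 2)).2)
              rwa [coeff_top hP (n + 2), one_mul] at this
            rw [hPQ]
            ring
          · rw [hQvan (P (n + 2)) k (by rw [(hP (n + 2)).2]; omega),
              horthQ (n + 2) k (by omega), horthQ (n + 1) k (by omega),
              horthQ n k (by omega)]
            ring
    linear_combination key
  · have hd : (P 1 - Q 1).natDegree ≤ 0 := by
      rw [natDegree_le_iff_coeff_eq_zero]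
      intro N hN
      rw [coeff_sub]
      match N, hN with
      | 1, _ => rw [coeff_top hP 1, coeff_top hQm 1, sub_self]
      | (N+2), _ =>
        rw [coeff_eq_zero_of_natDegree_lt (by rw [(hP 1).2]; omega),
          coeff_eq_zero_of_natDegree_lt (by rw [(hQm 1).2]; omega), sub_self]
    have := eq_C_of_natDegree_le_zero hd
    have ha0 : a 0 = (P 1 - Q 1).coeff 0 := rfl
    rw [ha0]
    linear_combination this


noncomputable def mSeq (Q : ℕ → Polynomial ℂ) : ℕ → ℂ
  | 0 => 1
  | (k+1) => -∑ j ∈ (Finset.range (k+1)).attach, (Q (k+1)).coeff j.1 * mSeq Q j.1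
decreasing_by exact Finset.mem_range.mp j.2

noncomputable def vFun (Q : ℕ → Polynomial ℂ) : Polynomial ℂ →ₗ[ℂ] ℂ where
  toFun f := f.sum fun j c => c * mSeq Q j
  map_add' f g := Polynomial.sum_add_index f g _ (fun i => zero_mul (mSeq Q i))
    (fun i b c => add_mul _ _ _)
  map_smul' c f := by
    rw [Polynomial.sum_smul_index _ _ _ (fun i => zero_mul (mSeq Q i))]
    simp only [Polynomial.sum, Finset.mul_sum, mul_assoc, RingHom.id_apply, smul_eq_mul]

lemma vFun_def (Q : ℕ → Polynomial ℂ) (f : Polynomial ℂ) :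
    vFun Q f = f.sum fun j c => c * mSeq Q j := rfl

lemma vFun_apply (Q : ℕ → Polynomial ℂ) (f : Polynomial ℂ) :
    vFun Q f = ∑ j ∈ Finset.range (f.natDegree + 1), f.coeff j * mSeq Q j := by
  rw [vFun_def]
  exact Polynomial.sum_over_range' f (fun n => zero_mul (mSeq Q n)) _ (Nat.lt_succ_self _)

lemma vFun_one (Q : ℕ → Polynomial ℂ) : vFun Q 1 = 1 := by
  rw [vFun_apply]
  simp [mSeq]

lemma vFun_Q {Q : ℕ → Polynomial ℂ} (hQm : MonicPS Q) (k : ℕ) :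
    vFun Q (Q k) = if k = 0 then 1 else 0 := by
  match k with
  | 0 =>
    rw [monicPS_zero_eq_one hQm, vFun_one]
    simp
  | (k+1) =>
    rw [vFun_apply, (hQm (k+1)).2, Finset.sum_range_succ, coeff_top hQm (k+1), one_mul]
    have hm : mSeq Q (k+1) = -∑ j ∈ Finset.range (k+1), (Q (k+1)).coeff j * mSeq Q j := by
      rw [mSeq]
      rw [← Finset.sum_attach (Finset.range (k+1)) (fun j => (Q (k+1)).coeff j * mSeq Q j)]
    rw [hm]
    simp

lemma backward_vanish {ω : ℂ} (hω : ω ≠ 0) {P Q : ℕ → Polynomial ℂ} (hP : MonicPS P)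
    {u0 : Polynomial ℂ →ₗ[ℂ] ℂ}
    (horthP : ∀ n m, n ≠ m → u0 (P n * P m) = 0)
    (hneP : ∀ k, u0 (P k * P k) ≠ 0)
    (hQ : ∀ n, Q n = ((n : ℂ) + 1)⁻¹ • Dw ω (P (n + 1)))
    {v : Polynomial ℂ →ₗ[ℂ] ℂ}
    (hvQ : ∀ k, v (Q k) = if k = 0 then 1 else 0)
    {a b : ℕ → ℂ}
    (hSR : ∀ n, P (n + 2) = Q (n + 2) + C (a (n + 1)) * Q (n + 1) + C (b n) * Q n) :
    ∀ (m : ℕ) (g : Polynomial ℂ) (n : ℕ), g.natDegree ≤ m → m < n → v (g * Q n) = 0 := by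
  have hQm := Q_monicPS hω hP hQ
  have hQ0 : Q 0 = 1 := monicPS_zero_eq_one hQm
  have hv1 : ∀ k, 1 ≤ k → v (Q k) = 0 := by
    intro k hk
    rw [hvQ k, if_neg (by omega)]
  intro m
  induction m using Nat.strong_induction_on with
  | _ m ih =>
    intro g n hg hmn
    set g' := g.comp (X + C (-ω)) with hg'
    have hg'deg : g'.natDegree = g.natDegree := natDegree_comp_shift g
    have hpr := Dw_mul (ω := ω) (P (n + 1)) g'
    rw [comp_collapse, DwP_eq hQ n] at hpr
    have hadj := adjoint hω hP horthP hQ hv1 hQ0 (P (n + 1) * g')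
    have hu0 : u0 (P 1 * (P (n + 1) * g')) = 0 := by
      have hre : P 1 * (P (n + 1) * g') = (P 1 * g') * P (n + 1) := by ring
      rw [hre]
      apply pair_zero hP horthP
      apply lt_of_le_of_lt (natDegree_mul_le)
      rw [(hP 1).2, hg'deg]
      omega
    rw [hu0, mul_zero] at hadj
    have hvDw : v (Dw ω (P (n + 1) * g')) = 0 := by
      rcases mul_eq_zero.mp hadj with h' | h'
      · exact absurd h' (hneP 1)
      · exact h'
    have hvPDw : v (P (n + 1) * Dw ω g') = 0 := by
      match m with
      | 0 =>
        have : g = C (g.coeff 0) := eq_C_of_natDegree_le_zero hg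
        rw [hg', this, C_comp, Dw_C, mul_zero, map_zero]
      | (m'+1) =>
        obtain ⟨t, rfl⟩ : ∃ t, n = t + 2 := ⟨n - 2, by omega⟩
        have hdw : (Dw ω g').natDegree ≤ m' :=
          Dw_natDegree_le (by rw [hg'deg]; exact hg)
        have hsr : P (t + 3) = Q (t + 3) + C (a (t + 2)) * Q (t + 2) + C (b (t + 1)) * Q (t + 1) :=
          hSR (t + 1)
        have hre : P (t + 2 + 1) * Dw ω g'
            = Dw ω g' * Q (t + 3) + C (a (t + 2)) * (Dw ω g' * Q (t + 2))
              + C (b (t + 1)) * (Dw ω g' * Q (t + 1)) := by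
          rw [show t + 2 + 1 = t + 3 from rfl, hsr]; ring
        rw [hre, map_add, map_add, ← smul_eq_C_mul, ← smul_eq_C_mul, map_smul, map_smul,
          ih m' (by omega) _ _ hdw (by omega),
          ih m' (by omega) _ _ hdw (by omega),
          ih m' (by omega) _ _ hdw (by omega)]
        simp
    have hfinal := congrArg v hpr
    rw [hvDw, map_add, hvPDw, zero_add, mul_smul_comm, map_smul, smul_eq_mul] at hfinal
    rcases mul_eq_zero.mp hfinal.symm with h' | h'
    · exact absurd h' (ncast_ne n)
    · exact h'

lemma ttrP {P : ℕ → Polynomial ℂ} (hP : MonicPS P) {u0 : Polynomial ℂ →ₗ[ℂ] ℂ}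
    (horthP : ∀ n m, n ≠ m → u0 (P n * P m) = 0)
    (hneP : ∀ k, u0 (P k * P k) ≠ 0) (n : ℕ) :
    ∃ β γ : ℂ, P (n + 3) = (X - C β) * P (n + 2) - C γ * P (n + 1) := by
  have hPvan : ∀ (g : Polynomial ℂ) (k : ℕ), g.natDegree < k → u0 (g * P k) = 0 :=
    fun g k h => pair_zero hP horthP h
  set s0 := P (n + 3) - X * P (n + 2) with hs0
  have hs0deg : s0.natDegree ≤ n + 2 := by
    rw [natDegree_le_iff_coeff_eq_zero]
    intro N hN
    obtain ⟨N', rfl⟩ : ∃ N', N = N' + 1 := ⟨N - 1, by omega⟩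
    rw [hs0, coeff_sub, coeff_X_mul]
    rcases Nat.lt_or_ge (n + 3) (N' + 1) with h' | h'
    · rw [coeff_eq_zero_of_natDegree_lt (by rw [(hP (n + 3)).2]; omega),
        coeff_eq_zero_of_natDegree_lt (by rw [(hP (n + 2)).2]; omega), sub_self]
    · obtain rfl : N' = n + 2 := by omega
      rw [coeff_top hP (n + 3), coeff_top hP (n + 2), sub_self]
  set β := -(u0 (s0 * P (n + 2))) / u0 (P (n + 2) * P (n + 2)) with hβ
  set γ := -(u0 (s0 * P (n + 1))) / u0 (P (n + 1) * P (n + 1)) with hγ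
  have key : s0 + C β * P (n + 2) + C γ * P (n + 1) = 0 := by
    apply eq_zero_of_pair hP hPvan hneP
    intro k
    have expand : u0 ((s0 + C β * P (n + 2) + C γ * P (n + 1)) * P k)
        = u0 (s0 * P k) + β * u0 (P (n + 2) * P k) + γ * u0 (P (n + 1) * P k) := by
      have hre : (s0 + C β * P (n + 2) + C γ * P (n + 1)) * P k
          = s0 * P k + C β * (P (n + 2) * P k) + C γ * (P (n + 1) * P k) := by ring
      rw [hre, map_add, map_add, ← smul_eq_C_mul, ← smul_eq_C_mul, map_smul, map_smul,
        smul_eq_mul, smul_eq_mul]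
    rw [expand]
    by_cases hk : k ≤ n
    · have h1 : u0 (s0 * P k) = 0 := by
        have hre : s0 * P k = P (n + 3) * P k - (X * P k) * P (n + 2) := by rw [hs0]; ring
        rw [hre, map_sub, horthP (n + 3) k (by omega),
          hPvan (X * P k) (n + 2) (by
            apply lt_of_le_of_lt natDegree_mul_le
            rw [natDegree_X, (hP k).2]; omega)]
        ring
      rw [h1, horthP (n + 2) k (by omega), horthP (n + 1) k (by omega)]
      ring
    · by_cases hk1 : k = n + 1
      · subst hk1
        rw [horthP (n + 2) (n + 1) (by omega), hγ,
          div_mul_cancel₀ _ (hneP (n + 1))]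
        ring
      · by_cases hk2 : k = n + 2
        · subst hk2
          rw [horthP (n + 1) (n + 2) (by omega), hβ,
            div_mul_cancel₀ _ (hneP (n + 2))]
          ring
        · have hk3 : n + 2 < k := by omega
          rw [hPvan s0 k (by omega), horthP (n + 2) k (by omega), horthP (n + 1) k (by omega)]
          ring
  exact ⟨β, γ, by linear_combination key⟩


lemma Dw_sub {ω : ℂ} (f g : Polynomial ℂ) : Dw ω (f - g) = Dw ω f - Dw ω g := by
  simp only [Dw, sub_comp]
  ring

lemma Dw_X_sub_C {ω : ℂ} (hω : ω ≠ 0) (β : ℂ) : Dw ω (X - C β) = 1 := by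
  rw [Dw, sub_comp, X_comp, C_comp]
  have h : (X + C ω - C β) - (X - C β) = C ω := by ring
  rw [h, ← C_mul, inv_mul_cancel₀ hω, C_1]

lemma v_pullC (v : Polynomial ℂ →ₗ[ℂ] ℂ) (c : ℂ) (q : Polynomial ℂ) :
    v (C c * q) = c * v q := by
  rw [← smul_eq_C_mul, map_smul, smul_eq_mul]

lemma ncast_ne2 (n : ℕ) : ((n : ℂ) + 2) ≠ 0 := by
  have : (((n + 2 : ℕ)) : ℂ) ≠ 0 := Nat.cast_ne_zero.mpr (by omega)
  push_cast at this
  exact this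

lemma kn_ne {ω : ℂ} (hω : ω ≠ 0) {P Q : ℕ → Polynomial ℂ} (hP : MonicPS P)
    {u0 : Polynomial ℂ →ₗ[ℂ] ℂ}
    (horthP : ∀ n m, n ≠ m → u0 (P n * P m) = 0)
    (hneP : ∀ k, u0 (P k * P k) ≠ 0)
    (hQ : ∀ n, Q n = ((n : ℂ) + 1)⁻¹ • Dw ω (P (n + 1)))
    {v : Polynomial ℂ →ₗ[ℂ] ℂ}
    (hvQ : ∀ k, v (Q k) = if k = 0 then 1 else 0)
    {a b : ℕ → ℂ}
    (hSR : ∀ n, P (n + 2) = Q (n + 2) + C (a (n + 1)) * Q (n + 1) + C (b n) * Q n) :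
    ∀ n, v (Q n * Q n) ≠ 0 := by
  have hQm := Q_monicPS hω hP hQ
  have hQ0 : Q 0 = 1 := monicPS_zero_eq_one hQm
  have hv1 : ∀ k, 1 ≤ k → v (Q k) = 0 := fun k hk => by rw [hvQ k, if_neg (by omega)]
  have hv1' : v 1 = 1 := by
    have := hvQ 0
    rwa [hQ0, if_pos rfl] at this
  have hQvan : ∀ (g : Polynomial ℂ) (k : ℕ), g.natDegree < k → v (g * Q k) = 0 :=
    fun g k h => backward_vanish hω hP horthP hneP hQ hvQ hSR g.natDegree g k le_rfl h
  have hPvan : ∀ (g : Polynomial ℂ) (k : ℕ), g.natDegree < k → u0 (g * P k) = 0 :=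
    fun g k h => pair_zero hP horthP h
  intro n hKn
  obtain ⟨β, γ, httr⟩ := ttrP hP horthP hneP n
  -- derivative identities with clean casts
  have d1 : Dw ω (P (n + 1)) = C ((n : ℂ) + 1) * Q n := by
    rw [DwP_eq hQ n, smul_eq_C_mul]
  have d2 : Dw ω (P (n + 2)) = C ((n : ℂ) + 2) * Q (n + 1) := by
    rw [show n + 2 = (n + 1) + 1 from rfl, DwP_eq hQ (n + 1), smul_eq_C_mul]
    congr 1
    push_cast
    ring
  have d3 : Dw ω (P (n + 3)) = C ((n : ℂ) + 3) * Q (n + 2) := by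
    rw [show n + 3 = (n + 2) + 1 from rfl, DwP_eq hQ (n + 2), smul_eq_C_mul]
    congr 1
    push_cast
    ring
  -- the Dω-image of the TTR
  have hT : C ((n : ℂ) + 3) * Q (n + 2)
      = (X - C β) * (C ((n : ℂ) + 2) * Q (n + 1))
        + (P (n + 2) + C ω * (C ((n : ℂ) + 2) * Q (n + 1)))
        - C γ * (C ((n : ℂ) + 1) * Q n) := by
    rw [← d3, httr, Dw_sub, Dw_mul, Dw_C_mul, Dw_X_sub_C hω, comp_shift_eq hω (P (n + 2)),
      d2, d1]
    ring
  -- basic pairings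
  have hx2 : v (X ^ n * Q (n + 2)) = 0 := hQvan _ _ (by rw [natDegree_X_pow]; omega)
  have hx1 : v (X ^ n * Q (n + 1)) = 0 := hQvan _ _ (by rw [natDegree_X_pow]; omega)
  have hx0 : v (X ^ n * Q n) = v (Q n * Q n) := by
    have := pair_coeff hQm hQvan (g := X ^ n) (n := n) (le_of_eq (natDegree_X_pow n))
    rwa [coeff_X_pow, if_pos rfl, one_mul] at this
  have hw : v ((X ^ n * (X - C β)) * Q (n + 1)) = v (Q (n + 1) * Q (n + 1)) := by
    have hdeg : (X ^ n * (X - C β)).natDegree ≤ n + 1 := by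
      apply le_trans natDegree_mul_le
      rw [natDegree_X_pow, natDegree_X_sub_C]
    have hco : (X ^ n * (X - C β)).coeff (n + 1) = 1 := by
      have hre : X ^ n * (X - C β) = X ^ (n + 1) - C β * X ^ n := by ring
      rw [hre, coeff_sub, coeff_X_pow, if_pos rfl, coeff_C_mul, coeff_X_pow,
        if_neg (by omega), mul_zero, sub_zero]
    have := pair_coeff hQm hQvan (g := X ^ n * (X - C β)) (n := n + 1) hdeg
    rwa [hco, one_mul] at this
  have hP2 : v (X ^ n * P (n + 2)) = b n * v (Q n * Q n) := by
    rw [hSR n]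
    have hre : X ^ n * (Q (n + 2) + C (a (n + 1)) * Q (n + 1) + C (b n) * Q n)
        = X ^ n * Q (n + 2) + C (a (n + 1)) * (X ^ n * Q (n + 1))
          + C (b n) * (X ^ n * Q n) := by ring
    rw [hre, map_add, map_add, v_pullC, v_pullC, hx2, hx1, hx0]
    ring
  -- EQ1
  have EQ1 : 0 = ((n : ℂ) + 2) * v (Q (n + 1) * Q (n + 1)) + b n * v (Q n * Q n)
      - γ * (((n : ℂ) + 1) * v (Q n * Q n)) := by
    have h : v (X ^ n * (C ((n : ℂ) + 3) * Q (n + 2)))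
        = v (X ^ n * ((X - C β) * (C ((n : ℂ) + 2) * Q (n + 1))
            + (P (n + 2) + C ω * (C ((n : ℂ) + 2) * Q (n + 1)))
            - C γ * (C ((n : ℂ) + 1) * Q n))) := by rw [← hT]
    have hreL : X ^ n * (C ((n : ℂ) + 3) * Q (n + 2))
        = C ((n : ℂ) + 3) * (X ^ n * Q (n + 2)) := by ring
    have hreR : X ^ n * ((X - C β) * (C ((n : ℂ) + 2) * Q (n + 1))
            + (P (n + 2) + C ω * (C ((n : ℂ) + 2) * Q (n + 1)))
            - C γ * (C ((n : ℂ) + 1) * Q n))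
        = C ((n : ℂ) + 2) * ((X ^ n * (X - C β)) * Q (n + 1))
          + X ^ n * P (n + 2)
          + C ω * (C ((n : ℂ) + 2) * (X ^ n * Q (n + 1)))
          - C γ * (C ((n : ℂ) + 1) * (X ^ n * Q n)) := by ring
    rw [hreL, hreR, v_pullC, hx2, mul_zero, map_sub v, map_add v, map_add v, v_pullC, v_pullC,
      v_pullC, v_pullC, v_pullC, hw, hx1, hP2, hx0, mul_zero, mul_zero] at h
    linear_combination h
  -- EQ2
  set g' := (Q (n + 1)).comp (X + C (-ω)) with hg'
  have hg'mon : g'.Monic := ((hQm (n + 1)).1).comp_X_add_C (-ω)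
  have hg'deg : g'.natDegree = n + 1 := by
    rw [hg', natDegree_comp_shift, (hQm (n + 1)).2]
  have hpr := Dw_mul (ω := ω) (P (n + 2)) g'
  rw [hg', comp_collapse, ← hg', d2] at hpr
  have hadj := adjoint hω hP horthP hQ hv1 hQ0 (P (n + 2) * g')
  have hu0val : u0 (P 1 * (P (n + 2) * g')) = u0 (P (n + 2) * P (n + 2)) := by
    have hre : P 1 * (P (n + 2) * g') = (P 1 * g') * P (n + 2) := by ring
    have hmon : (P 1 * g').Monic := (hP 1).1.mul hg'mon
    have hdeg' : (P 1 * g').natDegree = n + 2 := by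
      rw [(hP 1).1.natDegree_mul hg'mon, (hP 1).2, hg'deg]
      omega
    have hco : (P 1 * g').coeff (n + 2) = 1 := by
      have := hmon.coeff_natDegree
      rwa [hdeg'] at this
    have := pair_coeff hP hPvan (g := P 1 * g') (n := n + 2) (le_of_eq hdeg')
    rw [hre, this, hco, one_mul]
  have hPDwval : v (P (n + 2) * Dw ω g')
      = b n * (((n : ℂ) + 1) * v (Q n * Q n)) := by
    have hdegh : (Dw ω g').natDegree ≤ n := Dw_natDegree_le (le_of_eq hg'deg)
    have hcoh : (Dw ω g').coeff n = (n : ℂ) + 1 := by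
      rw [Dw_coeff hω (le_of_eq hg'deg)]
      have : g'.coeff (n + 1) = 1 := by
        have := hg'mon.coeff_natDegree
        rwa [hg'deg] at this
      rw [this, mul_one]
    have hre : P (n + 2) * Dw ω g'
        = Dw ω g' * Q (n + 2) + C (a (n + 1)) * (Dw ω g' * Q (n + 1))
          + C (b n) * (Dw ω g' * Q n) := by
      rw [hSR n]; ring
    rw [hre, map_add, map_add, v_pullC, v_pullC,
      hQvan _ (n + 2) (by omega), hQvan _ (n + 1) (by omega)]
    have := pair_coeff hQm hQvan (g := Dw ω g') (n := n) hdegh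
    rw [this, hcoh]
    ring
  have hvDwval : v (Dw ω (P (n + 2) * g'))
      = b n * (((n : ℂ) + 1) * v (Q n * Q n))
        + ((n : ℂ) + 2) * v (Q (n + 1) * Q (n + 1)) := by
    rw [hpr, map_add, hPDwval]
    congr 1
    have hre : Q (n + 1) * (C ((n : ℂ) + 2) * Q (n + 1))
        = C ((n : ℂ) + 2) * (Q (n + 1) * Q (n + 1)) := by ring
    rw [hre, v_pullC]
  have EQ2 : u0 (P 1 * P 1) * (b n * (((n : ℂ) + 1) * v (Q n * Q n))
      + ((n : ℂ) + 2) * v (Q (n + 1) * Q (n + 1))) = u0 (P (n + 2) * P (n + 2)) := by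
    rw [← hvDwval, hadj, hu0val, hv1', one_mul]
  -- conclude
  have hK1 : v (Q (n + 1) * Q (n + 1)) = 0 := by
    have h' : ((n : ℂ) + 2) * v (Q (n + 1) * Q (n + 1)) = 0 := by
      rw [hKn] at EQ1
      linear_combination -EQ1
    rcases mul_eq_zero.mp h' with h'' | h''
    · exact absurd h'' (ncast_ne2 n)
    · exact h''
  apply hneP (n + 2)
  rw [← EQ2, hKn, hK1]
  ring


lemma backward {ω : ℂ} (hω : ω ≠ 0) {P Q : ℕ → Polynomial ℂ} (hP : MonicPS P)
    {u0 : Polynomial ℂ →ₗ[ℂ] ℂ}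
    (horthP : ∀ n m, n ≠ m → u0 (P n * P m) = 0)
    (hneP : ∀ k, u0 (P k * P k) ≠ 0)
    (hQ : ∀ n, Q n = ((n : ℂ) + 1)⁻¹ • Dw ω (P (n + 1)))
    {a b : ℕ → ℂ}
    (hSR : ∀ n, P (n + 2) = Q (n + 2) + C (a (n + 1)) * Q (n + 1) + C (b n) * Q n) :
    ∃ v : Polynomial ℂ →ₗ[ℂ] ℂ,
      (∀ n m, n ≠ m → v (Q n * Q m) = 0) ∧ ∀ n, v (Q n * Q n) ≠ 0 := by
  have hQm := Q_monicPS hω hP hQ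
  set v := vFun Q with hv
  have hvQ : ∀ k, v (Q k) = if k = 0 then 1 else 0 := vFun_Q hQm
  refine ⟨v, ?_, kn_ne hω hP horthP hneP hQ hvQ hSR⟩
  intro i j hij
  rcases lt_or_gt_of_ne hij with h | h
  · exact backward_vanish hω hP horthP hneP hQ hvQ hSR i (Q i) j
      (le_of_eq (hQm i).2) h
  · rw [mul_comm]
    exact backward_vanish hω hP horthP hneP hQ hvQ hSR j (Q j) i
      (le_of_eq (hQm j).2) h

end SSR

theorem second_structure_relation_characterization
    (ω : ℂ) (hω : ω ≠ 0) (P Q : ℕ → Polynomial ℂ) (hP : MonicPS P)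
    (u0 : Polynomial ℂ →ₗ[ℂ] ℂ) (hops : IsOPSwrt P u0)
    (hQ : ∀ n, Q n = ((n : ℂ) + 1)⁻¹ • Dw ω (P (n + 1))) :
    (∃ v, IsOPSwrt Q v) ↔
      ∃ a b : ℕ → ℂ,
        (∀ n, P (n + 2) = Q (n + 2) + C (a (n + 1)) * Q (n + 1) + C (b n) * Q n) ∧
        P 1 = Q 1 + C (a 0) := by
  obtain ⟨horthP, hneP⟩ := hops
  constructor
  · rintro ⟨v, horthQ, hneQ⟩
    exact SSR.forward hω hP ⟨horthP, hneP⟩ hQ horthQ hneQ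
  · rintro ⟨a, b, hSR, hP1⟩
    obtain ⟨v, h1, h2⟩ := SSR.backward hω hP horthP hneP hQ hSR
    exact ⟨v, h1, h2⟩
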